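/- Let S = [[R, T'],[T, R']] ∈ U(2s) written in s×s blocks. A matrix 𝒯 ∈ U(s,s) satisfying the scattering relation (𝒯(a⁺,a⁻)=(b⁺,b⁻) ⟺ S(a⁺,b⁻)=(a⁻,b⁺) for all vectors) exists if and only if the block T is invertible; moreover T is invertible if and only if T' is invertible. -/

import Mathlib

open Matrix

noncomputable def Gmat (s : ℕ) : Matrix (Fin s ⊕ Fin s) (Fin s ⊕ Fin s) ℂ :=
  Matrix.fromBlocks 1 0 0 (-1)

private lemma isUnit_one_sub_swap {A : Type*} [Ring A] {a b : A}
    (h : IsUnit (1 - a * b)) : IsUnit (1 - b * a) := by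
  obtain ⟨u, hu⟩ := h
  have hu1 : (1 - a * b) * ↑u⁻¹ = 1 := by rw [← hu]; exact u.mul_inv
  have hu2 : (↑u⁻¹ : A) * (1 - a * b) = 1 := by rw [← hu]; exact u.inv_mul
  refine isUnit_iff_exists.mpr ⟨1 + b * ↑u⁻¹ * a, ?_, ?_⟩
  · have h1 : (1 - b * a) * (1 + b * ↑u⁻¹ * a) = 1 + b * ((1 - a * b) * ↑u⁻¹) * a - b * a := by
      noncomm_ring
    rw [h1, hu1]; noncomm_ring
  · have h2 : (1 + b * ↑u⁻¹ * a) * (1 - b * a) = 1 + b * (↑u⁻¹ * (1 - a * b)) * a - b * a := by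
      noncomm_ring
    rw [h2, hu2]; noncomm_ring

private lemma sum_elim_eq_iff {α β γ : Type*} {a c : α → γ} {b d : β → γ} :
    Sum.elim a b = Sum.elim c d ↔ a = c ∧ b = d :=
  ⟨fun h => ⟨funext fun i => congrFun h (.inl i), funext fun i => congrFun h (.inr i)⟩,
   by rintro ⟨rfl, rfl⟩; rfl⟩

/-- For a unitary scattering matrix S = [[R,T'],[T,R']], a pseudo-unitary 𝒯 ∈ U(s,s)
    with the scattering relation exists iff the transmission block T is invertible;
    moreover T is invertible iff T' is invertible. -/
theorem stmt5 (s : ℕ) (R T' T R' : Matrix (Fin s) (Fin s) ℂ)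
    (hS : Matrix.fromBlocks R T' T R' ∈ Matrix.unitaryGroup (Fin s ⊕ Fin s) ℂ) :
    ((∃ 𝒯 : Matrix (Fin s ⊕ Fin s) (Fin s ⊕ Fin s) ℂ,
        𝒯ᴴ * Gmat s * 𝒯 = Gmat s ∧
        ∀ ap am bp bm : Fin s → ℂ,
          (𝒯.mulVec (Sum.elim ap am) = Sum.elim bp bm ↔
           (Matrix.fromBlocks R T' T R').mulVec (Sum.elim ap bm) = Sum.elim am bp)) ↔
      IsUnit T) ∧ (IsUnit T ↔ IsUnit T') := by
  have h1 := Matrix.mem_unitaryGroup_iff'.mp hS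
  have h2 := Matrix.mem_unitaryGroup_iff.mp hS
  rw [Matrix.star_eq_conjTranspose, Matrix.fromBlocks_conjTranspose, Matrix.fromBlocks_multiply,
    ← Matrix.fromBlocks_one] at h1
  rw [Matrix.star_eq_conjTranspose, Matrix.fromBlocks_conjTranspose, Matrix.fromBlocks_multiply,
    ← Matrix.fromBlocks_one] at h2
  obtain ⟨e1, e2, e3, e4⟩ := Matrix.fromBlocks_inj.mp h1
  obtain ⟨g1, g2, g3, g4⟩ := Matrix.fromBlocks_inj.mp h2
  -- e1 : Rᴴ*R + Tᴴ*T = 1, e2 : Rᴴ*T' + Tᴴ*R' = 0, e3 : T'ᴴ*R + R'ᴴ*T = 0, e4 : T'ᴴ*T' + R'ᴴ*R' = 1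
  -- g1 : R*Rᴴ + T'*T'ᴴ = 1
  have part2 : IsUnit T ↔ IsUnit T' := by
    constructor
    · intro hT
      have hTT : IsUnit (Tᴴ * T) := ((Matrix.isUnit_conjTranspose T).mpr hT).mul hT
      rw [eq_sub_of_add_eq' e1] at hTT
      have h3 : IsUnit (1 - R * Rᴴ) := isUnit_one_sub_swap hTT
      rw [← eq_sub_of_add_eq' g1] at h3
      obtain ⟨u, hu⟩ := h3
      exact (Matrix.isUnit_iff_isUnit_det T').mpr <| Matrix.isUnit_det_of_right_inverse (B := T'ᴴ * (↑u⁻¹ : Matrix (Fin s) (Fin s) ℂ))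
        (by rw [← Matrix.mul_assoc, ← hu, u.mul_inv])
    · intro hT'
      have hTT : IsUnit (T' * T'ᴴ) := hT'.mul ((Matrix.isUnit_conjTranspose T').mpr hT')
      rw [eq_sub_of_add_eq' g1] at hTT
      have h3 : IsUnit (1 - Rᴴ * R) := isUnit_one_sub_swap hTT
      rw [← eq_sub_of_add_eq' e1] at h3
      obtain ⟨u, hu⟩ := h3
      exact (Matrix.isUnit_iff_isUnit_det T).mpr <| Matrix.isUnit_det_of_left_inverse (B := (↑u⁻¹ : Matrix (Fin s) (Fin s) ℂ) * Tᴴ)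
        (by rw [Matrix.mul_assoc, ← hu, u.inv_mul])
  refine ⟨⟨?_, fun hT => ?_⟩, part2⟩
  · rintro ⟨𝒯, -, hrel⟩
    apply part2.mpr
    rw [← Matrix.mulVec_surjective_iff_isUnit]
    intro am
    set v := 𝒯.mulVec (Sum.elim 0 am) with hv
    have hveq : 𝒯.mulVec (Sum.elim 0 am) = Sum.elim (v ∘ Sum.inl) (v ∘ Sum.inr) := by
      funext i; cases i <;> rfl
    have hs := (hrel 0 am (v ∘ Sum.inl) (v ∘ Sum.inr)).mp hveq
    rw [Matrix.fromBlocks_mulVec] at hs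
    simp only [Sum.elim_comp_inl, Sum.elim_comp_inr, Matrix.mulVec_zero, zero_add] at hs
    exact ⟨v ∘ Sum.inr, funext fun i => congrFun hs (Sum.inl i)⟩
  · -- construct 𝒯
    have hT' := part2.mp hT
    have hdet : IsUnit T'.det := (Matrix.isUnit_iff_isUnit_det T').mp hT'
    have hw2 : T' * T'⁻¹ = 1 := Matrix.mul_nonsing_inv T' hdet
    have hw1 : T'⁻¹ * T' = 1 := Matrix.nonsing_inv_mul T' hdet
    have hws : T'⁻¹ᴴ * T'ᴴ = 1 := by
      rw [← Matrix.conjTranspose_mul, hw2, Matrix.conjTranspose_one]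
    have f1 : Tᴴ * T = 1 - Rᴴ * R := eq_sub_of_add_eq' e1
    have f2 : Tᴴ * R' = -(Rᴴ * T') := by rw [eq_neg_iff_add_eq_zero, add_comm]; exact e2
    have f3 : R'ᴴ * T = -(T'ᴴ * R) := by rw [eq_neg_iff_add_eq_zero, add_comm]; exact e3
    have f4 : R'ᴴ * R' = 1 - T'ᴴ * T' := eq_sub_of_add_eq' e4
    refine ⟨Matrix.fromBlocks (T - R' * T'⁻¹ * R) (R' * T'⁻¹) (-(T'⁻¹ * R)) T'⁻¹, ?_, ?_⟩
    · unfold Gmat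
      rw [Matrix.fromBlocks_conjTranspose, Matrix.fromBlocks_multiply, Matrix.fromBlocks_multiply,
        Matrix.fromBlocks_inj]
      refine ⟨?_, ?_, ?_, ?_⟩ <;>
        simp only [Matrix.mul_one, Matrix.mul_zero, add_zero, zero_add, Matrix.mul_neg,
          Matrix.neg_mul, Matrix.conjTranspose_sub, Matrix.conjTranspose_mul,
          Matrix.conjTranspose_neg]
      · calc (Tᴴ - Rᴴ * (T'⁻¹ᴴ * R'ᴴ)) * (T - R' * T'⁻¹ * R) + - - -(Rᴴ * T'⁻¹ᴴ * (T'⁻¹ * R))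
            = (Tᴴ * T) - (Tᴴ * R') * (T'⁻¹ * R) - (Rᴴ * T'⁻¹ᴴ) * (R'ᴴ * T)
              + (Rᴴ * T'⁻¹ᴴ) * (R'ᴴ * R') * (T'⁻¹ * R) - (Rᴴ * T'⁻¹ᴴ) * (T'⁻¹ * R) := by
              noncomm_ring
          _ = (1 - Rᴴ * R) - (-(Rᴴ * T')) * (T'⁻¹ * R) - (Rᴴ * T'⁻¹ᴴ) * (-(T'ᴴ * R))
              + (Rᴴ * T'⁻¹ᴴ) * (1 - T'ᴴ * T') * (T'⁻¹ * R) - (Rᴴ * T'⁻¹ᴴ) * (T'⁻¹ * R) := by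
              rw [f1, f2, f3, f4]
          _ = 1 - Rᴴ * R + Rᴴ * ((T' * T'⁻¹) * R) + Rᴴ * ((T'⁻¹ᴴ * T'ᴴ) * R)
              - Rᴴ * ((T'⁻¹ᴴ * T'ᴴ) * ((T' * T'⁻¹) * R)) := by noncomm_ring
          _ = 1 := by rw [hw2, hws]; noncomm_ring
      · calc (Tᴴ - Rᴴ * (T'⁻¹ᴴ * R'ᴴ)) * (R' * T'⁻¹) + - -(Rᴴ * T'⁻¹ᴴ * T'⁻¹)
            = (Tᴴ * R') * T'⁻¹ - (Rᴴ * T'⁻¹ᴴ) * (R'ᴴ * R') * T'⁻¹ + (Rᴴ * T'⁻¹ᴴ) * T'⁻¹ := by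
              noncomm_ring
          _ = (-(Rᴴ * T')) * T'⁻¹ - (Rᴴ * T'⁻¹ᴴ) * (1 - T'ᴴ * T') * T'⁻¹
              + (Rᴴ * T'⁻¹ᴴ) * T'⁻¹ := by rw [f2, f4]
          _ = Rᴴ * ((T'⁻¹ᴴ * T'ᴴ) * (T' * T'⁻¹)) - Rᴴ * (T' * T'⁻¹) := by noncomm_ring
          _ = 0 := by rw [hw2, hws]; noncomm_ring
      · calc T'⁻¹ᴴ * R'ᴴ * (T - R' * T'⁻¹ * R) + - -(T'⁻¹ᴴ * (T'⁻¹ * R))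
            = T'⁻¹ᴴ * (R'ᴴ * T) - T'⁻¹ᴴ * (R'ᴴ * R') * (T'⁻¹ * R) + T'⁻¹ᴴ * (T'⁻¹ * R) := by
              noncomm_ring
          _ = T'⁻¹ᴴ * (-(T'ᴴ * R)) - T'⁻¹ᴴ * (1 - T'ᴴ * T') * (T'⁻¹ * R)
              + T'⁻¹ᴴ * (T'⁻¹ * R) := by rw [f3, f4]
          _ = (T'⁻¹ᴴ * T'ᴴ) * ((T' * T'⁻¹) * R) - (T'⁻¹ᴴ * T'ᴴ) * R := by noncomm_ring
          _ = 0 := by rw [hw2, hws]; noncomm_ring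
      · calc T'⁻¹ᴴ * R'ᴴ * (R' * T'⁻¹) + -(T'⁻¹ᴴ * T'⁻¹)
            = T'⁻¹ᴴ * (R'ᴴ * R') * T'⁻¹ - T'⁻¹ᴴ * T'⁻¹ := by noncomm_ring
          _ = T'⁻¹ᴴ * (1 - T'ᴴ * T') * T'⁻¹ - T'⁻¹ᴴ * T'⁻¹ := by rw [f4]
          _ = -((T'⁻¹ᴴ * T'ᴴ) * (T' * T'⁻¹)) := by noncomm_ring
          _ = -1 := by rw [hw2, hws]; noncomm_ring
    · intro ap am bp bm
      rw [Matrix.fromBlocks_mulVec, Matrix.fromBlocks_mulVec]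
      simp only [Sum.elim_comp_inl, Sum.elim_comp_inr]
      rw [sum_elim_eq_iff, sum_elim_eq_iff]
      constructor
      · rintro ⟨hA, hB⟩
        constructor
        · rw [← hB, Matrix.mulVec_add, Matrix.mulVec_mulVec, Matrix.mulVec_mulVec]
          have c1 : T' * -(T'⁻¹ * R) = -R := by
            rw [Matrix.mul_neg, ← Matrix.mul_assoc, hw2, Matrix.one_mul]
          rw [c1, hw2, Matrix.neg_mulVec, Matrix.one_mulVec]
          abel
        · rw [← hA, ← hB, Matrix.mulVec_add, Matrix.mulVec_mulVec, Matrix.mulVec_mulVec,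
            Matrix.sub_mulVec]
          have c2 : R' * -(T'⁻¹ * R) = -(R' * T'⁻¹ * R) := by
            rw [Matrix.mul_neg, Matrix.mul_assoc]
          rw [c2, Matrix.neg_mulVec]
          abel
      · rintro ⟨hA, hB⟩
        constructor
        · rw [← hB, ← hA, Matrix.mulVec_add, Matrix.mulVec_mulVec, Matrix.mulVec_mulVec,
            Matrix.sub_mulVec]
          have c3 : R' * T'⁻¹ * T' = R' := by rw [Matrix.mul_assoc, hw1, Matrix.mul_one]
          rw [c3]
          abel
        · rw [← hA, Matrix.mulVec_add, Matrix.mulVec_mulVec, Matrix.mulVec_mulVec, hw1,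
            Matrix.neg_mulVec, Matrix.one_mulVec]
          abel
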